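/- Let ε_n = n^{-α} for α ∈ (0,1), a_n = n + Σ_{i=1}^n 1/ε_i, c_n = min{i : a_i ≥ n}, b_n = 1/ε_{c_n}. Then a_n ~ n^{1+α}/(1+α), c_n ~ (1+α)^{1/(1+α)} n^{1/(1+α)}, and b_n ~ (1+α)^{α/(1+α)} n^{α/(1+α)} as n → ∞. -/

import Mathlib

open Filter Finset Real

lemma sum_rpow_bounds (α : ℝ) (hα0 : 0 < α) (n : ℕ) :
    (n:ℝ)^(α+1)/(α+1) ≤ (∑ i ∈ Finset.Icc 1 n, (i:ℝ)^α) ∧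
      (∑ i ∈ Finset.Icc 1 n, (i:ℝ)^α) ≤ (n:ℝ)^(α+1)/(α+1) + (n:ℝ)^α := by
  have hmono : MonotoneOn (fun x : ℝ => x ^ α) (Set.Icc (0:ℝ) (0 + (n:ℕ))) := by
    intro x hx y hy hxy
    exact Real.rpow_le_rpow hx.1 hxy hα0.le
  have hint : (∫ x in (0:ℝ)..(0 + (n:ℕ)), x ^ α) = (n:ℝ)^(α+1)/(α+1) := by
    rw [integral_rpow (Or.inl (by linarith))]
    rw [Real.zero_rpow (by positivity), zero_add, sub_zero]
  have hsum : (∑ i ∈ Finset.Icc 1 n, (i:ℝ)^α)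
      = ∑ i ∈ Finset.range n, ((0:ℝ) + ((i:ℕ)+1:ℕ)) ^ α := by
    rw [← Finset.Ico_add_one_right_eq_Icc, Finset.sum_Ico_eq_sum_range]
    apply Finset.sum_congr rfl
    intro i _
    push_cast
    ring_nf
  constructor
  · rw [hsum, ← hint]
    exact hmono.integral_le_sum
  · have h1 := hmono.sum_le_integral
    have h2 : (∑ i ∈ Finset.Icc 1 n, (i:ℝ)^α)
        = (∑ i ∈ Finset.range n, ((0:ℝ) + (i:ℕ)) ^ α) + (n:ℝ)^α := by
      rw [hsum]
      have := Finset.sum_range_succ (fun i : ℕ => ((i:ℕ):ℝ) ^ α) n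
      have h3 := Finset.sum_range_succ' (fun i : ℕ => ((i:ℕ):ℝ) ^ α) n
      simp only [Nat.cast_zero, Real.zero_rpow hα0.ne', add_zero, zero_add] at this h3 ⊢
      rw [show (∑ i ∈ Finset.range n, (((i:ℕ)+1:ℕ):ℝ) ^ α)
            = ∑ i ∈ Finset.range (n+1), ((i:ℕ):ℝ)^α - (0:ℝ)^α by
          rw [h3]; rw [Real.zero_rpow hα0.ne']; push_cast; ring, this]
      rw [Real.zero_rpow hα0.ne']
      ring
    rw [h2, ← hint]
    linarith

lemma part1 (α : ℝ) (hα0 : 0 < α) (hα1 : α < 1) (a : ℕ → ℝ)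
    (ha : ∀ n, a n = (n : ℝ) + ∑ i ∈ Finset.Icc 1 n, (i : ℝ) ^ α) :
    Filter.Tendsto (fun n => a n / ((n : ℝ) ^ (1 + α) / (1 + α)))
      Filter.atTop (nhds 1) := by
  have hβ : (0:ℝ) < 1 + α := by linarith
  have hna : Tendsto (fun n : ℕ => ((n:ℝ)) ^ (-α)) atTop (nhds 0) :=
    (tendsto_rpow_neg_atTop hα0).comp tendsto_natCast_atTop_atTop
  have hn1 : Tendsto (fun n : ℕ => ((n:ℝ)) ^ (-(1:ℝ))) atTop (nhds 0) :=
    (tendsto_rpow_neg_atTop one_pos).comp tendsto_natCast_atTop_atTop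
  have hlo : Tendsto (fun n : ℕ => 1 + (1+α) * (n:ℝ)^(-α)) atTop (nhds 1) := by
    have := (hna.const_mul (1+α)).const_add 1
    simpa using this
  have hhi : Tendsto (fun n : ℕ => 1 + (1+α) * (n:ℝ)^(-α) + (1+α) * (n:ℝ)^(-(1:ℝ)))
      atTop (nhds 1) := by
    have := ((hna.const_mul (1+α)).const_add 1).add (hn1.const_mul (1+α))
    simpa using this
  refine tendsto_of_tendsto_of_tendsto_of_le_of_le' hlo hhi ?_ ?_
  · filter_upwards [eventually_ge_atTop 1] with n hn
    have hx0 : (0:ℝ) < n := by exact_mod_cast hn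
    have hB := sum_rpow_bounds α hα0 n
    rw [add_comm α 1] at hB
    have hpow : (0:ℝ) < (n:ℝ)^(1+α) := Real.rpow_pos_of_pos hx0 _
    have hD : (0:ℝ) < (n:ℝ)^(1+α)/(1+α) := by positivity
    rw [le_div_iff₀ hD, ha]
    have hxx : (n:ℝ)^(-α) * (n:ℝ)^(1+α) = n := by
      rw [← Real.rpow_add hx0]
      norm_num
    have key : (1 + (1+α) * (n:ℝ)^(-α)) * ((n:ℝ)^(1+α)/(1+α))
        = (n:ℝ)^(1+α)/(1+α) + (n:ℝ) := by
      have e : (1+α) * (n:ℝ)^(-α) * ((n:ℝ)^(1+α)/(1+α))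
          = (n:ℝ)^(-α) * (n:ℝ)^(1+α) := by field_simp
      rw [add_mul, one_mul, e, hxx]
    rw [key]
    linarith [hB.1]
  · filter_upwards [eventually_ge_atTop 1] with n hn
    have hx0 : (0:ℝ) < n := by exact_mod_cast hn
    have hB := sum_rpow_bounds α hα0 n
    rw [add_comm α 1] at hB
    have hpow : (0:ℝ) < (n:ℝ)^(1+α) := Real.rpow_pos_of_pos hx0 _
    have hD : (0:ℝ) < (n:ℝ)^(1+α)/(1+α) := by positivity
    rw [div_le_iff₀ hD, ha]
    have hxx : (n:ℝ)^(-α) * (n:ℝ)^(1+α) = n := by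
      rw [← Real.rpow_add hx0]; norm_num
    have hxy : (n:ℝ)^(-(1:ℝ)) * (n:ℝ)^(1+α) = (n:ℝ)^α := by
      rw [← Real.rpow_add hx0]; norm_num
    have key : (1 + (1+α) * (n:ℝ)^(-α) + (1+α) * (n:ℝ)^(-(1:ℝ))) * ((n:ℝ)^(1+α)/(1+α))
        = (n:ℝ)^(1+α)/(1+α) + (n:ℝ) + (n:ℝ)^α := by
      have e : (1+α) * (n:ℝ)^(-α) * ((n:ℝ)^(1+α)/(1+α))
          = (n:ℝ)^(-α) * (n:ℝ)^(1+α) := by field_simp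
      have e2 : (1+α) * (n:ℝ)^(-(1:ℝ)) * ((n:ℝ)^(1+α)/(1+α))
          = (n:ℝ)^(-(1:ℝ)) * (n:ℝ)^(1+α) := by field_simp
      rw [add_mul, add_mul, one_mul, e, e2, hxx, hxy]
    rw [key]
    linarith [hB.2]

lemma part2 (α : ℝ) (a : ℕ → ℝ) (c : ℕ → ℕ) (hα0 : 0 < α) (hα1 : α < 1)
    (ha : ∀ n, a n = (n : ℝ) + ∑ i ∈ Finset.Icc 1 n, (i : ℝ) ^ α)
    (hc : ∀ n, c n = sInf {i : ℕ | (n : ℝ) ≤ a i})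
    (hr : Filter.Tendsto (fun n => a n / ((n : ℝ) ^ (1 + α) / (1 + α)))
      Filter.atTop (nhds 1)) :
    Filter.Tendsto
      (fun n => (c n : ℝ) / ((1 + α) ^ ((1 : ℝ) / (1 + α)) * (n : ℝ) ^ ((1 : ℝ) / (1 + α))))
      Filter.atTop (nhds 1) := by
  have hβ : (0:ℝ) < 1 + α := by linarith
  -- basic facts
  have h_a_ge : ∀ m : ℕ, (m:ℝ) ≤ a m := by
    intro m
    rw [ha]
    have : 0 ≤ ∑ i ∈ Finset.Icc 1 m, (i:ℝ)^α :=
      Finset.sum_nonneg fun i _ => Real.rpow_nonneg (Nat.cast_nonneg i) α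
    linarith
  have hmem : ∀ n : ℕ, (n:ℝ) ≤ a (c n) := by
    intro n
    rw [hc]
    exact Nat.sInf_mem (⟨n, h_a_ge n⟩ : {i : ℕ | (n : ℝ) ≤ a i}.Nonempty)
  have hamono : Monotone a := by
    apply monotone_nat_of_le_succ
    intro m
    rw [ha, ha, Finset.sum_Icc_succ_top (Nat.one_le_iff_ne_zero.mpr (Nat.succ_ne_zero m))]
    have h1 : (0:ℝ) ≤ ((m+1:ℕ):ℝ)^α := Real.rpow_nonneg (Nat.cast_nonneg _) α
    push_cast
    push_cast at h1
    linarith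
  have hctop : Filter.Tendsto c Filter.atTop Filter.atTop := by
    rw [tendsto_atTop]
    intro M
    filter_upwards [eventually_ge_atTop (⌊a M⌋₊ + 1)] with n hn
    by_contra hcon
    push_neg at hcon
    have h1 : a (c n) ≤ a M := hamono (le_of_lt hcon)
    have h2 : a M < ((⌊a M⌋₊ + 1 : ℕ) : ℝ) := by
      push_cast
      exact Nat.lt_floor_add_one _
    have h3 : ((⌊a M⌋₊ + 1 : ℕ) : ℝ) ≤ (n:ℝ) := by exact_mod_cast hn
    have := hmem n
    linarith
  have hlt : ∀ n : ℕ, 1 ≤ c n → a (c n - 1) < n := by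
    intro n h1
    have h2 : c n - 1 ∉ {i : ℕ | (n : ℝ) ≤ a i} := by
      rw [hc] at h1 ⊢
      exact Nat.notMem_of_lt_sInf (by omega)
    simpa [Set.mem_setOf_eq, not_le] using h2
  -- the sandwich for t n = n / ((c n)^(1+α)/(1+α))
  set r : ℕ → ℝ := fun m => a m / ((m : ℝ) ^ (1 + α) / (1 + α)) with hr_def
  have hcsub : Filter.Tendsto (fun n => c n - 1) Filter.atTop Filter.atTop := by
    rw [tendsto_atTop]
    intro M
    filter_upwards [hctop.eventually (eventually_ge_atTop (M+1))] with n hn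
    omega
  have hg : Filter.Tendsto (fun m : ℕ => ((m - 1 : ℕ):ℝ)^(1+α) / ((m:ℕ):ℝ)^(1+α))
      Filter.atTop (nhds 1) := by
    have hbase : Filter.Tendsto (fun m : ℕ => 1 - ((m:ℝ))⁻¹) Filter.atTop (nhds 1) := by
      have h0 : Filter.Tendsto (fun m : ℕ => ((m:ℝ))⁻¹) Filter.atTop (nhds 0) :=
        tendsto_inv_atTop_zero.comp tendsto_natCast_atTop_atTop
      simpa using ((tendsto_const_nhds : Filter.Tendsto (fun _ : ℕ => (1:ℝ))
        Filter.atTop (nhds 1)).sub h0)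
    have h2 := hbase.rpow_const (Or.inr hβ.le)
    rw [Real.one_rpow] at h2
    apply h2.congr'
    filter_upwards [eventually_ge_atTop 1] with m hm
    have hm0 : (0:ℝ) < m := by exact_mod_cast hm
    have hcast : ((m - 1 : ℕ):ℝ) = (m:ℝ) - 1 := by
      push_cast [hm]
      ring
    have hnum : (0:ℝ) ≤ (m:ℝ) - 1 := by
      have : (1:ℝ) ≤ m := by exact_mod_cast hm
      linarith
    rw [show (1 - ((m:ℝ))⁻¹) = ((m:ℝ) - 1) / m by field_simp,
      Real.div_rpow hnum (le_of_lt hm0), hcast]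
  have hupper := hr.comp hctop
  have hlower : Filter.Tendsto
      (fun n => r (c n - 1) * (((c n - 1 : ℕ):ℝ)^(1+α) / ((c n:ℕ):ℝ)^(1+α)))
      Filter.atTop (nhds 1) := by
    have := (hr.comp hcsub).mul (hg.comp hctop)
    simpa using this
  have ht : Filter.Tendsto (fun n : ℕ => (n:ℝ) / (((c n:ℕ):ℝ)^(1+α)/(1+α)))
      Filter.atTop (nhds 1) := by
    refine tendsto_of_tendsto_of_tendsto_of_le_of_le' hlower hupper ?_ ?_
    · filter_upwards [hctop.eventually (eventually_ge_atTop 2)] with n hn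
      have h1 : 1 ≤ c n - 1 := by omega
      have hp1 : (0:ℝ) < ((c n - 1 : ℕ):ℝ)^(1+α) :=
        Real.rpow_pos_of_pos (by exact_mod_cast h1) _
      have hp2 : (0:ℝ) < ((c n:ℕ):ℝ)^(1+α) :=
        Real.rpow_pos_of_pos (by exact_mod_cast (by omega : 1 ≤ c n)) _
      have alg : ∀ (A X Y β : ℝ), X ≠ 0 → Y ≠ 0 → β ≠ 0 →
          A / (X/β) * (X/Y) = A / (Y/β) := by
        intro A X Y β hX hY hb
        field_simp
      have hEq : r (c n - 1) * (((c n - 1 : ℕ):ℝ)^(1+α) / ((c n:ℕ):ℝ)^(1+α))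
          = a (c n - 1) / (((c n:ℕ):ℝ)^(1+α)/(1+α)) := by
        simp only [hr_def]
        exact alg _ _ _ _ hp1.ne' hp2.ne' hβ.ne'
      rw [hEq]
      have := (hlt n (by omega)).le
      gcongr
    · filter_upwards [hctop.eventually (eventually_ge_atTop 1)] with n hn
      have hp2 : (0:ℝ) < ((c n:ℕ):ℝ)^(1+α) :=
        Real.rpow_pos_of_pos (by exact_mod_cast hn) _
      have hD : (0:ℝ) < ((c n:ℕ):ℝ)^(1+α)/(1+α) := by positivity
      simp only [hr_def, Function.comp]
      have := hmem n
      gcongr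
  -- invert
  have hq : Filter.Tendsto (fun n : ℕ => ((c n:ℕ):ℝ)^(1+α) / ((1+α) * n))
      Filter.atTop (nhds 1) := by
    have h2 := ht.inv₀ one_ne_zero
    rw [inv_one] at h2
    apply h2.congr
    intro n
    rw [inv_div, div_div]
  -- take rpow 1/(1+α)
  have hfin := hq.rpow_const (Or.inr (by positivity : (0:ℝ) ≤ 1/(1+α)))
  rw [Real.one_rpow] at hfin
  apply hfin.congr
  intro n
  rw [Real.div_rpow (Real.rpow_nonneg (Nat.cast_nonneg _) _) (by positivity),
    ← Real.rpow_mul (Nat.cast_nonneg _), mul_one_div_cancel hβ.ne', Real.rpow_one,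
    Real.mul_rpow hβ.le (Nat.cast_nonneg _)]

/-- For `ε_n = n^{-α}` with `α ∈ (0,1)`, setting `a_n = n + Σ_{i=1}^n 1/ε_i`,
`c_n = min{i : a_i ≥ n}` and `b_n = 1/ε_{c_n}`, one has
`a_n ~ n^{1+α}/(1+α)`, `c_n ~ (1+α)^{1/(1+α)} n^{1/(1+α)}`, and
`b_n ~ (1+α)^{α/(1+α)} n^{α/(1+α)}` as `n → ∞`. -/
theorem power_drift_asymptotics (α : ℝ) (hα0 : 0 < α) (hα1 : α < 1)
    (a : ℕ → ℝ) (b : ℕ → ℝ) (c : ℕ → ℕ)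
    (ha : ∀ n, a n = (n : ℝ) + ∑ i ∈ Finset.Icc 1 n, (i : ℝ) ^ α)
    (hc : ∀ n, c n = sInf {i : ℕ | (n : ℝ) ≤ a i})
    (hb : ∀ n, b n = (c n : ℝ) ^ α) :
    Filter.Tendsto (fun n => a n / ((n : ℝ) ^ (1 + α) / (1 + α)))
        Filter.atTop (nhds 1) ∧
      Filter.Tendsto
        (fun n => (c n : ℝ) / ((1 + α) ^ ((1 : ℝ) / (1 + α)) * (n : ℝ) ^ ((1 : ℝ) / (1 + α))))
        Filter.atTop (nhds 1) ∧
      Filter.Tendsto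
        (fun n => b n / ((1 + α) ^ (α / (1 + α)) * (n : ℝ) ^ (α / (1 + α))))
        Filter.atTop (nhds 1) := by
  have hβ : (0:ℝ) < 1 + α := by linarith
  have h1 := part1 α hα0 hα1 a ha
  have h2 := part2 α a c hα0 hα1 ha hc h1
  refine ⟨h1, h2, ?_⟩
  have h3 := h2.rpow_const (Or.inr hα0.le)
  rw [Real.one_rpow] at h3
  apply h3.congr
  intro n
  rw [Real.div_rpow (Nat.cast_nonneg _) (by positivity),
    Real.mul_rpow (Real.rpow_nonneg hβ.le _) (Real.rpow_nonneg (Nat.cast_nonneg _) _),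
    ← Real.rpow_mul hβ.le, ← Real.rpow_mul (Nat.cast_nonneg _),
    show (1:ℝ)/(1+α) * α = α/(1+α) by ring, hb]
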